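/- Let P_𝔫 be a Q-symmetric positive-definite endomorphism of 𝔫 commuting with ad(k)|_𝔫 for every k ∈ 𝔨, and set P = 0 ⊕ P_𝔫. Then the extended curvature satisfies: (i) Rm(P)(T, V).T' = 0 for all T, T' ∈ 𝔱 and V ∈ 𝔪; (ii) Rm(P)(X, V).T' = 0 for all X ∈ 𝔫, T' ∈ 𝔱 and V ∈ 𝔪; (iii) π_𝔫(Rm(P)(X, Y).Z) = Rm_N(P_𝔫)(X, Y).Z for all X, Y, Z ∈ 𝔫, where π_𝔫 is the Q-orthogonal projection onto 𝔫. -/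

import Mathlib

open scoped RealInnerProductSpace

noncomputable section

variable {G : Type*} [NormedAddCommGroup G] [InnerProductSpace ℝ G] [FiniteDimensional ℝ G]

/-- Orthogonal projection onto the subspace `W`, as a plain map `G → G`. -/
def pr (W : Submodule ℝ G) : G → G := fun v => (W.orthogonalProjectionOnto v : G)

/-- Orthogonal projection onto the subspace `W`, as a continuous linear endomorphism of `G`. -/
def projL (W : Submodule ℝ G) : G →L[ℝ] G := W.subtypeL.comp W.orthogonalProjectionOnto

variable (br : G →ₗ[ℝ] G →ₗ[ℝ] G)

/-- `br` is a Lie bracket making `G` a real Lie algebra, and the inner product `Q` of `G`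
is ad-invariant: `Q([Z,X],Y) + Q(X,[Z,Y]) = 0`. -/
structure IsLieQ : Prop where
  alt : ∀ x : G, br x x = 0
  jacobi : ∀ x y z : G, br x (br y z) + br y (br z x) + br z (br x y) = 0
  adInv : ∀ Z X Y : G, ⟪br Z X, Y⟫ + ⟪X, br Z Y⟫ = 0

/-- `𝔥 ⊆ 𝔨` are Lie subalgebras of `𝔤` with `[𝔨,𝔨] ⊆ 𝔥`. -/
structure IsToralPair (𝔥 𝔨 : Submodule ℝ G) : Prop where
  subalg_h : ∀ x ∈ 𝔥, ∀ y ∈ 𝔥, br x y ∈ 𝔥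
  subalg_k : ∀ x ∈ 𝔨, ∀ y ∈ 𝔨, br x y ∈ 𝔨
  h_le_k : 𝔥 ≤ 𝔨
  bk_in_h : ∀ x ∈ 𝔨, ∀ y ∈ 𝔨, br x y ∈ 𝔥

/-- no nonzero element of `𝔫 = 𝔨ᗮ` commutes with all of `𝔨`. -/
def NoTrivial (𝔨 : Submodule ℝ G) : Prop :=
  ∀ X ∈ 𝔨ᗮ, (∀ k ∈ 𝔨, br k X = 0) → X = 0

/-- `A` maps `W` into itself and is `Q`-symmetric on `W`. -/
def SymOn (W : Submodule ℝ G) (A : G →L[ℝ] G) : Prop :=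
  (∀ v ∈ W, A v ∈ W) ∧ ∀ v ∈ W, ∀ w ∈ W, ⟪A v, w⟫ = ⟪v, A w⟫

/-- `A` is positive definite on the subspace `W`. -/
def PosDefOn (W : Submodule ℝ G) (A : G →L[ℝ] G) : Prop :=
  ∀ v ∈ W, v ≠ 0 → 0 < ⟪A v, v⟫

/-- `A` commutes with `ad(k)|_𝔫` on `𝔫 = 𝔨ᗮ`, for every `k ∈ 𝔨`. -/
def CommAd (𝔨 : Submodule ℝ G) (A : G →L[ℝ] G) : Prop :=
  ∀ k ∈ 𝔨, ∀ X ∈ 𝔨ᗮ, A (br k X) = br k (A X)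

/-- `Ainv` maps `W` to itself and is a two-sided inverse of `A` on the subspace `W`. -/
def InvOn' (W : Submodule ℝ G) (A Ainv : G →L[ℝ] G) : Prop :=
  (∀ v ∈ W, Ainv v ∈ W) ∧ (∀ v ∈ W, Ainv (A v) = v) ∧ (∀ v ∈ W, A (Ainv v) = v)

/-- The explicit formula for the extended operator `S(P)(V).W` of the generalized submersion
metric `P = P_𝔱 ⊕ P_𝔫`, where `𝔱 = 𝔨 ⊓ 𝔥ᗮ`, `𝔪 = 𝔥ᗮ`, `𝔫 = 𝔨ᗮ`:
`S(P)(T).T' = 0`, `S(P)(T).Y = -[T,Y] + (1/2) P_𝔫⁻¹.[P_𝔱.T, Y]`,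
`S(P)(X).T' = -(1/2) P_𝔫⁻¹.[X, P_𝔱.T']`,
`S(P)(X).Y = -(1/2)[X,Y]_𝔪 - (1/2) P_𝔫⁻¹.(([X,P_𝔫.Y])_𝔫 - ([P_𝔫.X,Y])_𝔫)`. -/
def Sfun (𝔥 𝔨 : Submodule ℝ G) (pt pn pninv : G →L[ℝ] G) (V W : G) : G :=
  -(br (pr (𝔨 ⊓ 𝔥ᗮ) V) (pr 𝔨ᗮ W)) + (2⁻¹ : ℝ) • pninv (br (pt (pr (𝔨 ⊓ 𝔥ᗮ) V)) (pr 𝔨ᗮ W))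
    - (2⁻¹ : ℝ) • pninv (br (pr 𝔨ᗮ V) (pt (pr (𝔨 ⊓ 𝔥ᗮ) W)))
    - (2⁻¹ : ℝ) • pr 𝔥ᗮ (br (pr 𝔨ᗮ V) (pr 𝔨ᗮ W))
    - (2⁻¹ : ℝ) • pninv (pr 𝔨ᗮ (br (pr 𝔨ᗮ V) (pn (pr 𝔨ᗮ W)))
        - pr 𝔨ᗮ (br (pn (pr 𝔨ᗮ V)) (pr 𝔨ᗮ W)))

/-- The extended curvature `Rm(P)(V₁,V₂).W` of the generalized submersion metric
`P = P_𝔱 ⊕ P_𝔫`: `Rm(P)(V₁,V₂) = ad([V₁,V₂]_𝔥)|_𝔪 - [S(P)(V₁),S(P)(V₂)] - S(P)([V₁,V₂]_𝔪)`. -/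
def Rmfun (𝔥 𝔨 : Submodule ℝ G) (pt pn pninv : G →L[ℝ] G) (V₁ V₂ W : G) : G :=
  br (pr 𝔥 (br V₁ V₂)) W
    - (Sfun br 𝔥 𝔨 pt pn pninv V₁ (Sfun br 𝔥 𝔨 pt pn pninv V₂ W)
        - Sfun br 𝔥 𝔨 pt pn pninv V₂ (Sfun br 𝔥 𝔨 pt pn pninv V₁ W))
    - Sfun br 𝔥 𝔨 pt pn pninv (pr 𝔥ᗮ (br V₁ V₂)) W

/-- `Tr (𝔪 ∋ Z ↦ Rm(P)(V₁, Z).V₂)`, computed via an orthonormal basis of `𝔪 = 𝔥ᗮ`. -/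
def RicBilin (𝔥 𝔨 : Submodule ℝ G) (pt pn pninv : G →L[ℝ] G) (V₁ V₂ : G) : ℝ :=
  ∑ i, ⟪((stdOrthonormalBasis ℝ 𝔥ᗮ) i : G),
        Rmfun br 𝔥 𝔨 pt pn pninv V₁ ((stdOrthonormalBasis ℝ 𝔥ᗮ) i : G) V₂⟫

/-- `Ric` is the extended Ricci endomorphism of the generalized submersion metric
`P = P_𝔱 ⊕ P_𝔫`: it maps `𝔪 = 𝔥ᗮ` to `𝔪`, vanishes on `𝔪ᗮ`, and satisfies
`Q(Ric.V₁, V₂) = Tr(𝔪 ∋ Z ↦ Rm(P)(V₁,Z).V₂)` for all `V₁, V₂ ∈ 𝔪`. -/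
def IsExtRic (𝔥 𝔨 : Submodule ℝ G) (pt pn pninv Ric : G →L[ℝ] G) : Prop :=
  Ric = (projL 𝔥ᗮ).comp (Ric.comp (projL 𝔥ᗮ)) ∧
  ∀ V₁ ∈ 𝔥ᗮ, ∀ V₂ ∈ 𝔥ᗮ, ⟪Ric V₁, V₂⟫ = RicBilin br 𝔥 𝔨 pt pn pninv V₁ V₂

/-- `SN` is the operator `S_N(P_𝔫)` of the base space `N`, relative to the reductive
decomposition `𝔤 = 𝔨 ⊕ 𝔫`, defined by the implicit equation
`-2 Q(S_N(X).Y, Z) = Q([X,Y]_𝔫, Z) + Q([P_𝔫⁻¹.Z, X]_𝔫, P_𝔫.Y) + Q([P_𝔫⁻¹.Z, Y]_𝔫, P_𝔫.X)`. -/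
def IsSN (𝔨 : Submodule ℝ G) (pn pninv : G →L[ℝ] G) (SN : G → G → G) : Prop :=
  (∀ X ∈ 𝔨ᗮ, ∀ Y ∈ 𝔨ᗮ, SN X Y ∈ 𝔨ᗮ) ∧
  ∀ X ∈ 𝔨ᗮ, ∀ Y ∈ 𝔨ᗮ, ∀ Z ∈ 𝔨ᗮ,
    (-2 : ℝ) * ⟪SN X Y, Z⟫ =
      ⟪pr 𝔨ᗮ (br X Y), Z⟫ + ⟪pr 𝔨ᗮ (br (pninv Z) X), pn Y⟫ + ⟪pr 𝔨ᗮ (br (pninv Z) Y), pn X⟫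

/-- The curvature `Rm_N(P_𝔫)(X,Y).W` of the base space `N`:
`Rm_N(X,Y) = ad([X,Y]_𝔨)|_𝔫 - [S_N(X),S_N(Y)] - S_N([X,Y]_𝔫)`. -/
def RmNfun (𝔨 : Submodule ℝ G) (SN : G → G → G) (X Y W : G) : G :=
  br (pr 𝔨 (br X Y)) W - (SN X (SN Y W) - SN Y (SN X W)) - SN (pr 𝔨ᗮ (br X Y)) W

/-- `RicN` is the Ricci endomorphism `Ric_N(P_𝔫)` of the base space `N`, relative to the
operator `SN = S_N(P_𝔫)`: it maps `𝔫 = 𝔨ᗮ` to `𝔫`, vanishes on `𝔫ᗮ`, and satisfies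
`Q(RicN.X, Y) = Tr(𝔫 ∋ Z ↦ Rm_N(X,Z).Y)` for all `X, Y ∈ 𝔫`. -/
def IsBaseRic (𝔨 : Submodule ℝ G) (SN : G → G → G) (RicN : G →L[ℝ] G) : Prop :=
  RicN = (projL 𝔨ᗮ).comp (RicN.comp (projL 𝔨ᗮ)) ∧
  ∀ X ∈ 𝔨ᗮ, ∀ Y ∈ 𝔨ᗮ,
    ⟪RicN X, Y⟫ = ∑ i, ⟪((stdOrthonormalBasis ℝ 𝔨ᗮ) i : G),
      RmNfun br 𝔨 SN X ((stdOrthonormalBasis ℝ 𝔨ᗮ) i : G) Y⟫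


set_option linter.unusedSectionVars false

section ExtRmHelpers

variable {br}

lemma pr_mem (W : Submodule ℝ G) (v : G) : pr W v ∈ W := (W.orthogonalProjectionOnto v).2

lemma pr_of_mem {W : Submodule ℝ G} {v : G} (h : v ∈ W) : pr W v = v := by
  exact congrArg Subtype.val (Submodule.orthogonalProjectionOnto_mem_subspace_eq_self (K := W) ⟨v, h⟩)

lemma pr_of_mem_orth {W : Submodule ℝ G} {v : G} (h : v ∈ Wᗮ) : pr W v = 0 := by
  simp [pr, Submodule.orthogonalProjectionOnto_apply_of_mem_orthogonal h]

lemma pr_zero (W : Submodule ℝ G) : pr W (0 : G) = 0 := by simp [pr]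

lemma pr_add (W : Submodule ℝ G) (u v : G) : pr W (u + v) = pr W u + pr W v := by simp [pr]

lemma pr_sub (W : Submodule ℝ G) (u v : G) : pr W (u - v) = pr W u - pr W v := by simp [pr]

lemma pr_neg (W : Submodule ℝ G) (u : G) : pr W (-u) = -pr W u := by simp [pr]

lemma pr_smul (W : Submodule ℝ G) (c : ℝ) (u : G) : pr W (c • u) = c • pr W u := by simp [pr]

lemma pr_inner (W : Submodule ℝ G) (v : G) {w : G} (hw : w ∈ W) :
    ⟪pr W v, w⟫ = ⟪v, w⟫ := by
  have h : ⟪w, v - pr W v⟫ = 0 :=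
    (Submodule.mem_orthogonal W _).1 (Submodule.sub_starProjection_mem_orthogonal (K := W) v) w hw
  rw [inner_sub_right] at h
  have h2 : ⟪w, v⟫ = ⟪w, pr W v⟫ := sub_eq_zero.1 h
  calc ⟪pr W v, w⟫ = ⟪w, pr W v⟫ := real_inner_comm _ _
    _ = ⟪w, v⟫ := h2.symm
    _ = ⟪v, w⟫ := real_inner_comm _ _

lemma pr_orthogonal_eq (W : Submodule ℝ G) (v : G) :
    pr Wᗮ v = v - pr W v := by
  simp [pr]


lemma br_antisym (hLie : IsLieQ br) (a b : G) : br a b = -br b a := by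
  have h := hLie.alt (a + b)
  rw [map_add] at h
  simp only [LinearMap.add_apply, map_add, hLie.alt a, hLie.alt b] at h
  have h2 : br a b + br b a = 0 := by
    abel_nf at h ⊢
    exact h
  exact eq_neg_of_add_eq_zero_left h2

lemma br_cycle (hLie : IsLieQ br) (a b c : G) : ⟪br a b, c⟫ = ⟪br c a, b⟫ := by
  have h1 := hLie.adInv a b c
  have h2 : ⟪br a b, c⟫ = -⟪b, br a c⟫ := by linarith
  rw [h2, br_antisym hLie a c, inner_neg_right, neg_neg, real_inner_comm]

lemma br_mem_orth (hLie : IsLieQ br) {W : Submodule ℝ G}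
    (hW : ∀ x ∈ W, ∀ y ∈ W, br x y ∈ W) {k X : G} (hk : k ∈ W) (hX : X ∈ Wᗮ) :
    br k X ∈ Wᗮ := by
  rw [Submodule.mem_orthogonal]
  intro u hu
  have h := hLie.adInv k u X
  have hz : ⟪br k u, X⟫ = 0 := (Submodule.mem_orthogonal W X).1 hX (br k u) (hW k hk u hu)
  linarith

lemma mem_inf_orth_eq_zero {W : Submodule ℝ G} {v : G} (h1 : v ∈ W) (h2 : v ∈ Wᗮ) :
    v = 0 := by
  have h := (Submodule.mem_orthogonal W v).1 h2 v h1
  rwa [inner_self_eq_zero] at h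

lemma decompK {𝔥 𝔨 : Submodule ℝ G} (hpair : IsToralPair br 𝔥 𝔨) (v : G) :
    pr 𝔨 v = pr 𝔥 v + pr (𝔨 ⊓ 𝔥ᗮ) v := by
  have key : ∀ u ∈ 𝔨, pr (𝔨 ⊓ 𝔥ᗮ) u = u - pr 𝔥 u := by
    intro u hu
    have h1 : u - pr 𝔥 u ∈ 𝔨 ⊓ 𝔥ᗮ :=
      ⟨Submodule.sub_mem 𝔨 hu (hpair.h_le_k (pr_mem 𝔥 u)),
        Submodule.sub_starProjection_mem_orthogonal u⟩
    have h2 : pr 𝔥 u ∈ (𝔨 ⊓ 𝔥ᗮ)ᗮ :=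
      (Submodule.orthogonal_le (inf_le_right : 𝔨 ⊓ 𝔥ᗮ ≤ 𝔥ᗮ))
        (Submodule.le_orthogonal_orthogonal 𝔥 (pr_mem 𝔥 u))
    have h3 : pr (𝔨 ⊓ 𝔥ᗮ) u
        = pr (𝔨 ⊓ 𝔥ᗮ) (pr 𝔥 u) + pr (𝔨 ⊓ 𝔥ᗮ) (u - pr 𝔥 u) := by
      rw [← pr_add]; congr 1; abel
    rw [h3, pr_of_mem_orth h2, pr_of_mem h1, zero_add]
  have hn : v - pr 𝔨 v ∈ 𝔨ᗮ := Submodule.sub_starProjection_mem_orthogonal v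
  have hv : v = pr 𝔨 v + (v - pr 𝔨 v) := by abel
  have e1 : pr 𝔥 v = pr 𝔥 (pr 𝔨 v) := by
    conv_lhs => rw [hv]
    rw [pr_add, pr_of_mem_orth (Submodule.orthogonal_le hpair.h_le_k hn), add_zero]
  have e2 : pr (𝔨 ⊓ 𝔥ᗮ) v = pr (𝔨 ⊓ 𝔥ᗮ) (pr 𝔨 v) := by
    conv_lhs => rw [hv]
    rw [pr_add, pr_of_mem_orth (Submodule.orthogonal_le inf_le_left hn), add_zero]
  rw [e1, e2, key (pr 𝔨 v) (pr_mem 𝔨 v)]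
  abel

lemma decompM {𝔥 𝔨 : Submodule ℝ G} (hpair : IsToralPair br 𝔥 𝔨) (v : G) :
    pr 𝔥ᗮ v = pr (𝔨 ⊓ 𝔥ᗮ) v + pr 𝔨ᗮ v := by
  rw [pr_orthogonal_eq 𝔥 v, pr_orthogonal_eq 𝔨 v, decompK hpair v]
  abel


lemma Sfun_zero_pt (𝔥 𝔨 : Submodule ℝ G) (pn pninv : G →L[ℝ] G) (V W : G) :
    Sfun br 𝔥 𝔨 0 pn pninv V W =
      -(br (pr (𝔨 ⊓ 𝔥ᗮ) V) (pr 𝔨ᗮ W)) - (2⁻¹ : ℝ) • pr 𝔥ᗮ (br (pr 𝔨ᗮ V) (pr 𝔨ᗮ W))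
        - (2⁻¹ : ℝ) • pninv (pr 𝔨ᗮ (br (pr 𝔨ᗮ V) (pn (pr 𝔨ᗮ W)))
            - pr 𝔨ᗮ (br (pn (pr 𝔨ᗮ V)) (pr 𝔨ᗮ W))) := by
  simp [Sfun]

lemma Sfun_right_n_zero (𝔥 𝔨 : Submodule ℝ G) (pn pninv : G →L[ℝ] G) (V W : G)
    (hW : pr 𝔨ᗮ W = 0) : Sfun br 𝔥 𝔨 0 pn pninv V W = 0 := by
  simp [Sfun_zero_pt, hW, pr_zero]

lemma Sfun_right_sub (𝔥 𝔨 : Submodule ℝ G) (pt pn pninv : G →L[ℝ] G) (V W₁ W₂ : G) :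
    Sfun br 𝔥 𝔨 pt pn pninv V (W₁ - W₂)
      = Sfun br 𝔥 𝔨 pt pn pninv V W₁ - Sfun br 𝔥 𝔨 pt pn pninv V W₂ := by
  simp only [Sfun, pr_sub, map_sub, smul_sub]
  abel

lemma Sfun_right_smul (𝔥 𝔨 : Submodule ℝ G) (pt pn pninv : G →L[ℝ] G) (c : ℝ) (V W : G) :
    Sfun br 𝔥 𝔨 pt pn pninv V (c • W) = c • Sfun br 𝔥 𝔨 pt pn pninv V W := by
  simp only [Sfun, pr_smul, map_smul, map_sub, smul_sub]
  module

lemma pninv_symm {𝔨 : Submodule ℝ G} {pn pninv : G →L[ℝ] G} (hpn : SymOn 𝔨ᗮ pn)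
    (hpninv : InvOn' 𝔨ᗮ pn pninv) {u v : G} (hu : u ∈ 𝔨ᗮ) (hv : v ∈ 𝔨ᗮ) :
    ⟪pninv u, v⟫ = ⟪u, pninv v⟫ := by
  calc ⟪pninv u, v⟫ = ⟪pninv u, pn (pninv v)⟫ := by rw [hpninv.2.2 v hv]
    _ = ⟪pn (pninv u), pninv v⟫ := (hpn.2 _ (hpninv.1 u hu) _ (hpninv.1 v hv)).symm
    _ = ⟪u, pninv v⟫ := by rw [hpninv.2.2 u hu]

lemma SN_formula (hLie : IsLieQ br) (𝔨 : Submodule ℝ G) {pn pninv : G →L[ℝ] G}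
    (hpn : SymOn 𝔨ᗮ pn) (hpninv : InvOn' 𝔨ᗮ pn pninv) {SN : G → G → G}
    (hSN : IsSN br 𝔨 pn pninv SN) {X Y : G} (hX : X ∈ 𝔨ᗮ) (hY : Y ∈ 𝔨ᗮ) :
    SN X Y = -((2⁻¹ : ℝ) • pr 𝔨ᗮ (br X Y))
      - (2⁻¹ : ℝ) • pninv (pr 𝔨ᗮ (br X (pn Y)) - pr 𝔨ᗮ (br (pn X) Y)) := by
  set R : G := -((2⁻¹ : ℝ) • pr 𝔨ᗮ (br X Y))
      - (2⁻¹ : ℝ) • pninv (pr 𝔨ᗮ (br X (pn Y)) - pr 𝔨ᗮ (br (pn X) Y)) with hR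
  have hRmem : R ∈ 𝔨ᗮ := by
    apply Submodule.sub_mem
    · exact Submodule.neg_mem _ (Submodule.smul_mem _ _ (pr_mem _ _))
    · exact Submodule.smul_mem _ _
        (hpninv.1 _ (Submodule.sub_mem _ (pr_mem _ _) (pr_mem _ _)))
  have key : ∀ Z ∈ 𝔨ᗮ, ⟪SN X Y, Z⟫ = ⟪R, Z⟫ := by
    intro Z hZ
    have heq := hSN.2 X hX Y hY Z hZ
    have e1 : ⟪pninv (pr 𝔨ᗮ (br X (pn Y))), Z⟫ = ⟪pr 𝔨ᗮ (br (pninv Z) X), pn Y⟫ := by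
      rw [pninv_symm hpn hpninv (pr_mem _ _) hZ, pr_inner _ _ (hpninv.1 Z hZ),
        pr_inner _ _ (hpn.1 Y hY)]
      exact br_cycle hLie X (pn Y) (pninv Z)
    have e2 : ⟪pninv (pr 𝔨ᗮ (br (pn X) Y)), Z⟫ = -⟪pr 𝔨ᗮ (br (pninv Z) Y), pn X⟫ := by
      rw [pninv_symm hpn hpninv (pr_mem _ _) hZ, pr_inner _ _ (hpninv.1 Z hZ),
        pr_inner _ _ (hpn.1 X hX), br_antisym hLie (pn X) Y, inner_neg_left,
        br_cycle hLie Y (pn X) (pninv Z)]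
    have expand : ⟪R, Z⟫ = -((2⁻¹ : ℝ) * ⟪pr 𝔨ᗮ (br X Y), Z⟫)
        - (2⁻¹ : ℝ) * (⟪pninv (pr 𝔨ᗮ (br X (pn Y))), Z⟫
            - ⟪pninv (pr 𝔨ᗮ (br (pn X) Y)), Z⟫) := by
      rw [hR]
      simp only [inner_sub_left, inner_smul_left, inner_neg_left, map_sub,
        RCLike.conj_to_real, conj_trivial]
    rw [expand, e1, e2]
    linarith
  have hdiff : SN X Y - R ∈ 𝔨ᗮ := Submodule.sub_mem _ (hSN.1 X hX Y hY) hRmem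
  have h0 : ⟪SN X Y - R, SN X Y - R⟫ = 0 := by
    rw [inner_sub_left, key _ hdiff, sub_self]
  exact sub_eq_zero.1 (inner_self_eq_zero.1 h0)

lemma Sfun_eq_SN (hLie : IsLieQ br) {𝔥 𝔨 : Submodule ℝ G} (hpair : IsToralPair br 𝔥 𝔨)
    {pn pninv : G →L[ℝ] G} (hpn : SymOn 𝔨ᗮ pn) (hpninv : InvOn' 𝔨ᗮ pn pninv)
    {SN : G → G → G} (hSN : IsSN br 𝔨 pn pninv SN) {X Z : G}
    (hX : X ∈ 𝔨ᗮ) (hZ : Z ∈ 𝔨ᗮ) :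
    Sfun br 𝔥 𝔨 0 pn pninv X Z = SN X Z - (2⁻¹ : ℝ) • pr (𝔨 ⊓ 𝔥ᗮ) (br X Z) := by
  rw [Sfun_zero_pt, pr_of_mem_orth (Submodule.orthogonal_le inf_le_left hX),
    pr_of_mem hX, pr_of_mem hZ, decompM hpair (br X Z),
    SN_formula hLie 𝔨 hpn hpninv hSN hX hZ]
  simp [smul_add]
  abel

lemma Sfun_m_split {𝔥 𝔨 : Submodule ℝ G} (hpair : IsToralPair br 𝔥 𝔨)
    (pn pninv : G →L[ℝ] G) (w Z : G) :
    Sfun br 𝔥 𝔨 0 pn pninv (pr 𝔥ᗮ w) Z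
      = -(br (pr (𝔨 ⊓ 𝔥ᗮ) w) (pr 𝔨ᗮ Z)) + Sfun br 𝔥 𝔨 0 pn pninv (pr 𝔨ᗮ w) Z := by
  have hht : pr (𝔨 ⊓ 𝔥ᗮ) (pr 𝔥 w) = 0 :=
    pr_of_mem_orth ((Submodule.orthogonal_le (inf_le_right : 𝔨 ⊓ 𝔥ᗮ ≤ 𝔥ᗮ))
      (Submodule.le_orthogonal_orthogonal 𝔥 (pr_mem 𝔥 w)))
  have hhn : pr 𝔨ᗮ (pr 𝔥 w) = 0 :=
    pr_of_mem_orth (Submodule.le_orthogonal_orthogonal 𝔨 (hpair.h_le_k (pr_mem 𝔥 w)))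
  have hnn : pr 𝔨ᗮ (pr 𝔨ᗮ w) = pr 𝔨ᗮ w := pr_of_mem (pr_mem _ _)
  have htn : pr (𝔨 ⊓ 𝔥ᗮ) (pr 𝔨ᗮ w) = 0 :=
    pr_of_mem_orth ((Submodule.orthogonal_le inf_le_left) (pr_mem 𝔨ᗮ w))
  have e1 : pr (𝔨 ⊓ 𝔥ᗮ) (pr 𝔥ᗮ w) = pr (𝔨 ⊓ 𝔥ᗮ) w := by
    rw [pr_orthogonal_eq 𝔥 w, pr_sub, hht, sub_zero]
  have e2 : pr 𝔨ᗮ (pr 𝔥ᗮ w) = pr 𝔨ᗮ w := by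
    rw [pr_orthogonal_eq 𝔥 w, pr_sub, hhn, sub_zero]
  rw [Sfun_zero_pt, Sfun_zero_pt, e1, e2, hnn, htn]
  simp
  abel

lemma Rm_right_t (hLie : IsLieQ br) {𝔥 𝔨 : Submodule ℝ G} (hpair : IsToralPair br 𝔥 𝔨)
    (pn pninv : G →L[ℝ] G) (V₁ V₂ : G) {T' : G} (hT' : T' ∈ 𝔨 ⊓ 𝔥ᗮ) :
    Rmfun br 𝔥 𝔨 0 pn pninv V₁ V₂ T' = 0 := by
  have hT'k : pr 𝔨ᗮ T' = 0 :=
    pr_of_mem_orth (Submodule.le_orthogonal_orthogonal 𝔨 hT'.1)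
  have h0 : ∀ V : G, Sfun br 𝔥 𝔨 0 pn pninv V 0 = 0 := fun V =>
    Sfun_right_n_zero 𝔥 𝔨 pn pninv V 0 (pr_zero _)
  have h1 : Sfun br 𝔥 𝔨 0 pn pninv V₂ T' = 0 :=
    Sfun_right_n_zero 𝔥 𝔨 pn pninv V₂ T' hT'k
  have h2 : Sfun br 𝔥 𝔨 0 pn pninv V₁ T' = 0 :=
    Sfun_right_n_zero 𝔥 𝔨 pn pninv V₁ T' hT'k
  have hbr : br (pr 𝔥 (br V₁ V₂)) T' = 0 :=
    mem_inf_orth_eq_zero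
      (hpair.bk_in_h _ (hpair.h_le_k (pr_mem 𝔥 _)) _ hT'.1)
      (br_mem_orth hLie hpair.subalg_h (pr_mem 𝔥 _) hT'.2)
  rw [Rmfun, h1, h2, h0 V₁, h0 V₂, hbr,
    Sfun_right_n_zero 𝔥 𝔨 pn pninv _ T' hT'k]
  simp
end ExtRmHelpers

/-- for `P = 0 ⊕ P_𝔫`, the extended curvature satisfies
(i) `Rm(P)(T,V).T' = 0` for `T, T' ∈ 𝔱`, `V ∈ 𝔪`;
(ii) `Rm(P)(X,V).T' = 0` for `X ∈ 𝔫`, `T' ∈ 𝔱`, `V ∈ 𝔪`;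
(iii) `π_𝔫(Rm(P)(X,Y).Z) = Rm_N(P_𝔫)(X,Y).Z` for `X, Y, Z ∈ 𝔫`. -/
theorem extRm_collapsed
    (hLie : IsLieQ br) (𝔥 𝔨 : Submodule ℝ G) (hpair : IsToralPair br 𝔥 𝔨)
    (pn pninv : G →L[ℝ] G)
    (hpn : SymOn 𝔨ᗮ pn) (hpnpos : PosDefOn 𝔨ᗮ pn) (hpncomm : CommAd br 𝔨 pn)
    (hpninv : InvOn' 𝔨ᗮ pn pninv)
    (SN : G → G → G) (hSN : IsSN br 𝔨 pn pninv SN) :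
    (∀ T ∈ 𝔨 ⊓ 𝔥ᗮ, ∀ T' ∈ 𝔨 ⊓ 𝔥ᗮ, ∀ V ∈ 𝔥ᗮ,
        Rmfun br 𝔥 𝔨 0 pn pninv T V T' = 0) ∧
    (∀ X ∈ 𝔨ᗮ, ∀ T' ∈ 𝔨 ⊓ 𝔥ᗮ, ∀ V ∈ 𝔥ᗮ,
        Rmfun br 𝔥 𝔨 0 pn pninv X V T' = 0) ∧
    (∀ X ∈ 𝔨ᗮ, ∀ Y ∈ 𝔨ᗮ, ∀ Z ∈ 𝔨ᗮ,
        pr 𝔨ᗮ (Rmfun br 𝔥 𝔨 0 pn pninv X Y Z) = RmNfun br 𝔨 SN X Y Z) := by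
  refine ⟨?_, ?_, ?_⟩
  · intro T _hT T' hT' V _hV
    exact Rm_right_t hLie hpair pn pninv T V hT'
  · intro X _hX T' hT' V _hV
    exact Rm_right_t hLie hpair pn pninv X V hT'
  · intro X hX Y hY Z hZ
    have hSNYZ : SN Y Z ∈ 𝔨ᗮ := hSN.1 Y hY Z hZ
    have hSNXZ : SN X Z ∈ 𝔨ᗮ := hSN.1 X hX Z hZ
    have hts : ∀ u : G, pr 𝔨ᗮ (pr (𝔨 ⊓ 𝔥ᗮ) u) = 0 := fun u =>
      pr_of_mem_orth (Submodule.le_orthogonal_orthogonal 𝔨 (pr_mem (𝔨 ⊓ 𝔥ᗮ) u).1)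
    have hXS : Sfun br 𝔥 𝔨 0 pn pninv X (Sfun br 𝔥 𝔨 0 pn pninv Y Z)
        = SN X (SN Y Z) - (2⁻¹ : ℝ) • pr (𝔨 ⊓ 𝔥ᗮ) (br X (SN Y Z)) := by
      rw [Sfun_eq_SN hLie hpair hpn hpninv hSN hY hZ, Sfun_right_sub, Sfun_right_smul,
        Sfun_right_n_zero 𝔥 𝔨 pn pninv X _ (hts _),
        Sfun_eq_SN hLie hpair hpn hpninv hSN hX hSNYZ]
      simp
    have hYS : Sfun br 𝔥 𝔨 0 pn pninv Y (Sfun br 𝔥 𝔨 0 pn pninv X Z)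
        = SN Y (SN X Z) - (2⁻¹ : ℝ) • pr (𝔨 ⊓ 𝔥ᗮ) (br Y (SN X Z)) := by
      rw [Sfun_eq_SN hLie hpair hpn hpninv hSN hX hZ, Sfun_right_sub, Sfun_right_smul,
        Sfun_right_n_zero 𝔥 𝔨 pn pninv Y _ (hts _),
        Sfun_eq_SN hLie hpair hpn hpninv hSN hY hSNXZ]
      simp
    have hlast : Sfun br 𝔥 𝔨 0 pn pninv (pr 𝔥ᗮ (br X Y)) Z
        = -(br (pr (𝔨 ⊓ 𝔥ᗮ) (br X Y)) Z) + (SN (pr 𝔨ᗮ (br X Y)) Z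
            - (2⁻¹ : ℝ) • pr (𝔨 ⊓ 𝔥ᗮ) (br (pr 𝔨ᗮ (br X Y)) Z)) := by
      rw [Sfun_m_split hpair pn pninv (br X Y) Z, pr_of_mem hZ,
        Sfun_eq_SN hLie hpair hpn hpninv hSN (pr_mem 𝔨ᗮ (br X Y)) hZ]
    have hrm : Rmfun br 𝔥 𝔨 0 pn pninv X Y Z
        = (br (pr 𝔥 (br X Y)) Z + br (pr (𝔨 ⊓ 𝔥ᗮ) (br X Y)) Z
            - (SN X (SN Y Z) - SN Y (SN X Z)) - SN (pr 𝔨ᗮ (br X Y)) Z)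
          + (2⁻¹ : ℝ) • (pr (𝔨 ⊓ 𝔥ᗮ) (br X (SN Y Z)) - pr (𝔨 ⊓ 𝔥ᗮ) (br Y (SN X Z))
              + pr (𝔨 ⊓ 𝔥ᗮ) (br (pr 𝔨ᗮ (br X Y)) Z)) := by
      rw [Rmfun, hXS, hYS, hlast]
      module
    have hbrn : ∀ k, k ∈ 𝔨 → pr 𝔨ᗮ (br k Z) = br k Z := fun k hk =>
      pr_of_mem (br_mem_orth hLie hpair.subalg_k hk hZ)
    rw [hrm]
    simp only [pr_add, pr_sub, pr_smul, pr_neg]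
    rw [hts, hts, hts, hbrn _ (hpair.h_le_k (pr_mem 𝔥 (br X Y))),
      hbrn _ (pr_mem (𝔨 ⊓ 𝔥ᗮ) (br X Y)).1,
      pr_of_mem (hSN.1 X hX _ hSNYZ), pr_of_mem (hSN.1 Y hY _ hSNXZ),
      pr_of_mem (hSN.1 _ (pr_mem 𝔨ᗮ (br X Y)) Z hZ),
      RmNfun, decompK hpair (br X Y), map_add, LinearMap.add_apply]
    simp only [smul_zero, sub_zero, add_zero, zero_add, sub_self]
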